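/- Let G be a connected graph, T a spanning tree of G with maximum degree k, and let B be the set of vertices of T having degree k or k−1 in T. If removing B from T yields a forest such that no edge of G connects two vertices in different components of this forest and all edges of G leaving a component go to B, then opt(G) ≥ k − 1. More precisely: if every edge of G not in T either has an endpoint in B or joins two vertices of the same component of T − B, then every spanning tree of G has maximum degree at least k − 1. -/

import Mathlib

open SimpleGraph

/-- `T` is a spanning tree of `G`. -/
def IsSpanningTree {V : Type*} (G T : SimpleGraph V) : Prop :=
  T ≤ G ∧ T.IsTree

/-- The maximum vertex degree of a graph on a finite vertex set. -/
noncomputable def maxDeg {V : Type*} [Fintype V] (T : SimpleGraph V) : ℕ :=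
  Finset.univ.sup fun v => (T.neighborSet v).ncard

/-- The forest `T − B` obtained from `T` by deleting the vertices of `B`
(and their incident edges). -/
def forestMinus {V : Type*} (T : SimpleGraph V) (B : V → Prop) : SimpleGraph V :=
  SimpleGraph.fromRel fun u v => T.Adj u v ∧ ¬ B u ∧ ¬ B v


section AuxLemmas
open SimpleGraph Finset
variable {V : Type*}


lemma sym2_ex (e : Sym2 V) : ∃ a b, e = s(a, b) :=
  Sym2.ind (fun a b => ⟨a, b, rfl⟩) e

lemma isAcyclic_mono {H H' : SimpleGraph V} (hle : H' ≤ H) (ha : H.IsAcyclic) :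
    H'.IsAcyclic := fun _ c hc => ha (c.mapLe hle) (hc.mapLe hle)

lemma reach_surgery {H : SimpleGraph V} {u v x y : V} (w : H.Walk x y) :
    (H \ fromEdgeSet {s(u,v)}).Reachable x y
    ∨ ((H \ fromEdgeSet {s(u,v)}).Reachable x u ∧ (H \ fromEdgeSet {s(u,v)}).Reachable v y)
    ∨ ((H \ fromEdgeSet {s(u,v)}).Reachable x v ∧ (H \ fromEdgeSet {s(u,v)}).Reachable u y) := by
  induction w with
  | nil => exact Or.inl (Reachable.refl _)
  | @cons a b c hadj p ih =>
    by_cases he : s(a, b) = s(u, v)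
    · rw [Sym2.eq_iff] at he
      rcases he with ⟨rfl, rfl⟩ | ⟨rfl, rfl⟩
      · rcases ih with hr | ⟨h1, h2⟩ | ⟨h1, h2⟩
        · exact Or.inr (Or.inl ⟨Reachable.refl _, hr⟩)
        · exact Or.inr (Or.inl ⟨Reachable.refl _, h2⟩)
        · exact Or.inl h2
      · rcases ih with hr | ⟨h1, h2⟩ | ⟨h1, h2⟩
        · exact Or.inr (Or.inr ⟨Reachable.refl _, hr⟩)
        · exact Or.inl h2
        · exact Or.inr (Or.inr ⟨Reachable.refl _, h2⟩)
    · have had : (H \ fromEdgeSet {s(u,v)}).Adj a b := by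
        rw [sdiff_adj, fromEdgeSet_adj]
        exact ⟨hadj, by simp [he]⟩
      rcases ih with hr | ⟨h1, h2⟩ | ⟨h1, h2⟩
      · exact Or.inl (had.reachable.trans hr)
      · exact Or.inr (Or.inl ⟨had.reachable.trans h1, h2⟩)
      · exact Or.inr (Or.inr ⟨had.reachable.trans h1, h2⟩)


lemma reach_eq_of_no_edges {H : SimpleGraph V} (h : H.edgeSet = ∅) {x y : V}
    (r : H.Reachable x y) : x = y := by
  obtain ⟨w⟩ := r
  cases w with
  | nil => rfl
  | cons ha p =>
    exact absurd (H.mem_edgeSet.2 ha) (by simp [h])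

lemma edgeSet_delete_eq {H : SimpleGraph V} {u v : V} :
    (H \ fromEdgeSet {s(u,v)}).edgeSet = H.edgeSet \ {s(u,v)} := by
  rw [edgeSet_sdiff, edgeSet_fromEdgeSet, edgeSet_sdiff_sdiff_isDiag]

lemma card_cc_delete_le [Fintype V] (H : SimpleGraph V) (u v : V) :
    Nat.card (H \ fromEdgeSet {s(u,v)}).ConnectedComponent ≤
      Nat.card H.ConnectedComponent + 1 := by
  classical
  set H' := H \ fromEdgeSet {s(u,v)} with hH'
  haveI : Fintype H'.ConnectedComponent := Fintype.ofFinite _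
  haveI : Fintype H.ConnectedComponent := Fintype.ofFinite _
  have hle : H' ≤ H := sdiff_le
  let ψ : H'.ConnectedComponent → H.ConnectedComponent :=
    ConnectedComponent.map (Hom.ofLE hle)
  have hψ : ∀ x : V, ψ (H'.connectedComponentMk x) = H.connectedComponentMk x := by
    intro x
    simp [ψ, ConnectedComponent.map_mk, Hom.ofLE_apply]
  have hinj : Set.InjOn ψ ↑((univ : Finset H'.ConnectedComponent).erase
      (H'.connectedComponentMk v)) := by
    intro c1 h1 c2 h2 heq
    obtain ⟨x, rfl⟩ := c1.exists_rep
    obtain ⟨y, rfl⟩ := c2.exists_rep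
    simp only [Finset.coe_erase, Set.mem_diff, Set.mem_singleton_iff] at h1 h2
    rw [show (Quot.mk H'.Reachable x) = H'.connectedComponentMk x from rfl] at h1 ⊢
    rw [show (Quot.mk H'.Reachable y) = H'.connectedComponentMk y from rfl] at h2 ⊢
    have heq' : H.connectedComponentMk x = H.connectedComponentMk y := by
      rw [← hψ, ← hψ]; exact heq
    have hr : H.Reachable x y := ConnectedComponent.exact heq'
    obtain ⟨w⟩ := hr
    rcases reach_surgery (u := u) (v := v) w with hr' | ⟨h3, h4⟩ | ⟨h3, h4⟩
    · exact ConnectedComponent.sound hr'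
    · exact absurd (ConnectedComponent.sound h4.symm) h2.2
    · exact absurd (ConnectedComponent.sound h3) h1.2
  have hcard := Finset.card_le_card_of_injOn ψ
    (fun c _ => Finset.mem_univ (ψ c)) hinj
  rw [Finset.card_erase_of_mem (Finset.mem_univ _)] at hcard
  simp only [Finset.card_univ] at hcard
  rw [Nat.card_eq_fintype_card, Nat.card_eq_fintype_card]
  omega

lemma card_cc_delete_ge [Fintype V] {H : SimpleGraph V} {u v : V} (hadj : H.Adj u v)
    (hnr : ¬ (H \ fromEdgeSet {s(u,v)}).Reachable u v) :
    Nat.card H.ConnectedComponent + 1 ≤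
      Nat.card (H \ fromEdgeSet {s(u,v)}).ConnectedComponent := by
  classical
  set H' := H \ fromEdgeSet {s(u,v)} with hH'
  haveI : Fintype H'.ConnectedComponent := Fintype.ofFinite _
  haveI : Fintype H.ConnectedComponent := Fintype.ofFinite _
  have hle : H' ≤ H := sdiff_le
  let ψ : H'.ConnectedComponent → H.ConnectedComponent :=
    ConnectedComponent.map (Hom.ofLE hle)
  have hψ : ∀ x : V, ψ (H'.connectedComponentMk x) = H.connectedComponentMk x := by
    intro x
    simp [ψ, ConnectedComponent.map_mk, Hom.ofLE_apply]
  have hsurj : Function.Surjective ψ := by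
    intro c
    obtain ⟨x, rfl⟩ := c.exists_rep
    exact ⟨H'.connectedComponentMk x, hψ x⟩
  have hninj : ¬ Function.Injective ψ := by
    intro hinj
    apply hnr
    apply ConnectedComponent.exact
    apply hinj
    rw [hψ, hψ]
    exact ConnectedComponent.sound hadj.reachable
  have := Fintype.card_lt_of_surjective_not_injective ψ hsurj hninj
  rw [Nat.card_eq_fintype_card, Nat.card_eq_fintype_card]
  omega

lemma card_le_cc_add_edges [Fintype V] (H : SimpleGraph V) :
    Fintype.card V ≤ Nat.card H.ConnectedComponent + H.edgeSet.ncard := by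
  classical
  generalize hN : H.edgeSet.ncard = N
  induction N generalizing H with
  | zero =>
    rw [Set.ncard_eq_zero (Set.toFinite _)] at hN
    haveI : Fintype H.ConnectedComponent := Fintype.ofFinite _
    have hinj : Function.Injective H.connectedComponentMk := by
      intro x y hxy
      exact reach_eq_of_no_edges hN (ConnectedComponent.exact hxy)
    have := Fintype.card_le_of_injective _ hinj
    rw [Nat.card_eq_fintype_card]
    omega
  | succ N ih =>
    have hne : H.edgeSet.Nonempty := by
      apply Set.nonempty_of_ncard_ne_zero; omega
    obtain ⟨e, he⟩ := hne
    obtain ⟨u, v, rfl⟩ := sym2_ex e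
    set H' := H \ fromEdgeSet {s(u,v)} with hH'
    have hE : H'.edgeSet = H.edgeSet \ {s(u,v)} := edgeSet_delete_eq
    have hcard : H'.edgeSet.ncard = N := by
      rw [hE, Set.ncard_diff_singleton_of_mem he]
      omega
    have h1 := ih H' hcard
    have h2 := card_cc_delete_le H u v
    rw [← hH'] at h2
    omega

lemma acyclic_edges_add_cc_le [Fintype V] (H : SimpleGraph V) (ha : H.IsAcyclic) :
    H.edgeSet.ncard + Nat.card H.ConnectedComponent ≤ Fintype.card V := by
  classical
  generalize hN : H.edgeSet.ncard = N
  induction N generalizing H with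
  | zero =>
    haveI : Fintype H.ConnectedComponent := Fintype.ofFinite _
    have hsurj : Function.Surjective H.connectedComponentMk := fun c => by
      obtain ⟨x, rfl⟩ := c.exists_rep; exact ⟨x, rfl⟩
    have := Fintype.card_le_of_surjective _ hsurj
    rw [Nat.card_eq_fintype_card]
    omega
  | succ N ih =>
    have hne : H.edgeSet.Nonempty := by
      apply Set.nonempty_of_ncard_ne_zero; omega
    obtain ⟨e, he⟩ := hne
    obtain ⟨u, v, rfl⟩ := sym2_ex e
    have hadj : H.Adj u v := H.mem_edgeSet.1 he
    have hbridge := isAcyclic_iff_forall_adj_isBridge.1 ha hadj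
    rw [isBridge_iff] at hbridge
    set H' := H \ fromEdgeSet {s(u,v)} with hH'
    have hE : H'.edgeSet = H.edgeSet \ {s(u,v)} := edgeSet_delete_eq
    have hcard : H'.edgeSet.ncard = N := by
      rw [hE, Set.ncard_diff_singleton_of_mem he]
      omega
    have h1 := ih H' (isAcyclic_mono sdiff_le ha) hcard
    have h2 := card_cc_delete_ge hadj hbridge
    rw [← hH'] at h2
    omega

end AuxLemmas

open Finset

/-- Lower-bound lemma: let `T` be a spanning tree of `G` of maximum degree `k ≥ 2` and
let `B` be the set of vertices of degree ≥ `k−1` in `T`.  If every edge of `G` not in `T`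
either has an endpoint in `B` or joins two vertices in the same component of `T − B`,
then every spanning tree of `G` has maximum degree at least `k − 1`. -/
theorem opt_ge_k_sub_one {V : Type*} [Fintype V]
    (G T : SimpleGraph V) (k : ℕ) (hk2 : 2 ≤ k)
    (hG : G.Connected) (hT : IsSpanningTree G T) (hk : maxDeg T = k)
    (B : V → Prop) (hB : ∀ v, B v ↔ k - 1 ≤ (T.neighborSet v).ncard)
    (h : ∀ u v, G.Adj u v → ¬ T.Adj u v →
      B u ∨ B v ∨ (forestMinus T B).Reachable u v) :
    ∀ T' : SimpleGraph V, IsSpanningTree G T' → k - 1 ≤ maxDeg T' := by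
  
  classical
  intro T' hT'
  by_contra hcon
  push_neg at hcon
  obtain ⟨hTG, hTtree⟩ := hT
  obtain ⟨hT'G, hT'tree⟩ := hT'
  -- nonempty
  have hVne : Nonempty V := by
    by_contra hE
    haveI := not_nonempty_iff.mp hE
    rw [maxDeg, Finset.univ_eq_empty, Finset.sup_empty] at hk
    simp at hk
    omega
  -- a vertex of degree k
  obtain ⟨b0, -, hb0⟩ := Finset.exists_mem_eq_sup (univ : Finset V) univ_nonempty
    (fun v => (T.neighborSet v).ncard)
  rw [← maxDeg, hk] at hb0
  have hb0B : B b0 := (hB b0).2 (by omega)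
  set F := forestMinus T B with hF
  set mkC := F.connectedComponentMk with hmkC
  set Bs : Finset V := univ.filter (fun v => B v) with hBs
  have hb0Bs : b0 ∈ Bs := by simp [hBs, hb0B]
  set n := Fintype.card V with hn
  -- degree facts
  have hmax' : ∀ v, (T'.neighborSet v).ncard ≤ k - 2 := by
    intro v
    have h1 : (T'.neighborSet v).ncard ≤ maxDeg T' :=
      Finset.le_sup (f := fun v => (T'.neighborSet v).ncard) (Finset.mem_univ v)
    omega
  have hFadj : ∀ {a b : V}, F.Adj a b ↔ T.Adj a b ∧ ¬B a ∧ ¬B b := by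
    intro a b
    rw [hF, forestMinus, fromRel_adj]
    constructor
    · rintro ⟨hne, ⟨h1, h2, h3⟩ | ⟨h1, h2, h3⟩⟩
      exacts [⟨h1, h2, h3⟩, ⟨h1.symm, h3, h2⟩]
    · rintro ⟨h1, h2, h3⟩
      exact ⟨h1.ne, Or.inl ⟨h1, h2, h3⟩⟩
  -- edge finsets of T
  set ET : Finset (Sym2 V) := T.edgeFinset with hET
  have hETcard : ET.card + 1 = n := hTtree.card_edgeFinset
  set EB1 : Finset (Sym2 V) := ET.filter (fun e => ∃ x ∈ e, B x) with hEB1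
  set EF : Finset (Sym2 V) := ET.filter (fun e => ¬ ∃ x ∈ e, B x) with hEF
  have hsplit : EB1.card + EF.card = ET.card :=
    Finset.card_filter_add_card_filter_not _
  have hEFeq : F.edgeSet = ↑EF := by
    ext e
    induction e using Sym2.ind with
    | _ a b =>
      simp only [mem_edgeSet, hEF, Finset.coe_filter, Set.mem_setOf_eq, hET,
        mem_edgeFinset, mem_edgeSet, Sym2.mem_iff, hFadj]
      constructor
      · rintro ⟨h1, h2, h3⟩
        exact ⟨h1, by push_neg; rintro x (rfl | rfl) <;> assumption⟩
      · rintro ⟨h1, h2⟩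
        push_neg at h2
        exact ⟨h1, h2 a (Or.inl rfl), h2 b (Or.inr rfl)⟩
  have hEFcard : F.edgeSet.ncard = EF.card := by rw [hEFeq, Set.ncard_coe_finset]
  -- lemma A applied to F
  set m := Nat.card F.ConnectedComponent with hm
  have hAF : n ≤ m + EF.card := by
    have := card_le_cc_add_edges F
    rw [hEFcard] at this
    exact this
  -- degree sum over Bs in T
  have hsumT : Bs.card * (k - 1) ≤ ∑ b ∈ Bs, (T.neighborSet b).ncard := by
    rw [← smul_eq_mul]
    apply Finset.card_nsmul_le_sum
    intro b hb
    exact (hB b).1 (by simpa [hBs] using hb)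
  -- pairs counting for T
  set P : Finset (V × V) := univ.filter (fun p => T.Adj p.1 p.2 ∧ B p.1) with hP
  have hPcard : P.card = ∑ b ∈ Bs, (T.neighborSet b).ncard := by
    have hPeq : P = Bs.biUnion
        (fun b => (T.neighborSet b).toFinset.image (fun w => (b, w))) := by
      ext p
      simp only [hP, Finset.mem_filter, Finset.mem_univ, true_and, Finset.mem_biUnion,
        Finset.mem_image, Set.mem_toFinset, mem_neighborSet]
      constructor
      · rintro ⟨h1, h2⟩
        refine ⟨p.1, ?_, p.2, h1, rfl⟩
        simp only [hBs, Finset.mem_filter]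
        exact ⟨Finset.mem_univ _, h2⟩
      · rintro ⟨b, hb, w, hw, rfl⟩
        simp only [hBs, Finset.mem_filter] at hb
        exact ⟨hw, hb.2⟩
    rw [hPeq, Finset.card_biUnion]
    · apply Finset.sum_congr rfl
      intro b _
      rw [Finset.card_image_of_injective _ (fun w1 w2 hw => congrArg Prod.snd hw),
        Set.ncard_eq_toFinset_card']
    · intro x _ y _ hxy
      rw [Function.onFun, Finset.disjoint_left]
      rintro p hp1 hp2
      simp only [Finset.mem_image] at hp1 hp2
      obtain ⟨w1, -, rfl⟩ := hp1
      obtain ⟨w2, -, h2⟩ := hp2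
      exact hxy (congrArg Prod.fst h2).symm
  set E2 : Finset (Sym2 V) := ET.filter (fun e => ∀ x ∈ e, B x) with hE2
  -- P.card ≤ EB1.card + E2.card
  have hPle : P.card ≤ EB1.card + E2.card := by
    have hmapsto : ∀ p ∈ P, Sym2.mk p.1 p.2 ∈ EB1 := by
      rintro ⟨x, y⟩ hp
      simp only [hP, Finset.mem_filter, Finset.mem_univ, true_and] at hp
      simp only [hEB1, Finset.mem_filter, hET, mem_edgeFinset, mem_edgeSet]
      exact ⟨hp.1, x, Sym2.mem_mk_left _ _, hp.2⟩
    rw [Finset.card_eq_sum_card_fiberwise hmapsto]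
    have hbound : ∀ e ∈ EB1,
        (P.filter (fun p => Sym2.mk p.1 p.2 = e)).card ≤ 1 + (if (∀ x ∈ e, B x) then 1 else 0) := by
      intro e he
      obtain ⟨a, b, rfl⟩ := sym2_ex e
      by_cases hall : ∀ x ∈ s(a, b), B x
      · rw [if_pos hall]
        have hsub : P.filter (fun p => Sym2.mk p.1 p.2 = s(a, b)) ⊆ {(a, b), (b, a)} := by
          intro p hp
          have := (Finset.mem_filter.1 hp).2
          rw [show s(a,b) = Sym2.mk (a, b).1 (a, b).2 from rfl, Sym2.mk_eq_mk_iff] at this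
          simp only [Finset.mem_insert, Finset.mem_singleton]
          rcases this with rfl | h'
          · exact Or.inl rfl
          · exact Or.inr (by rw [h']; rfl)
        calc (P.filter (fun p => Sym2.mk p.1 p.2 = s(a, b))).card
            ≤ ({(a, b), (b, a)} : Finset (V × V)).card := Finset.card_le_card hsub
          _ ≤ 2 := by
              apply le_trans (Finset.card_insert_le _ _)
              simp
      · rw [if_neg hall]
        push_neg at hall
        obtain ⟨x, hx, hxB⟩ := hall
        rw [Sym2.mem_iff] at hx
        have hsub : ∀ c d : V, ¬ B c →
            P.filter (fun p => Sym2.mk p.1 p.2 = s(c, d)) ⊆ {(d, c)} := by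
          intro c d hc p hp
          simp only [Finset.mem_filter, hP, Finset.mem_univ, true_and] at hp
          obtain ⟨⟨-, hpB⟩, hpe⟩ := hp
          rw [show s(c,d) = Sym2.mk (c, d).1 (c, d).2 from rfl, Sym2.mk_eq_mk_iff] at hpe
          rcases hpe with rfl | h'
          · exact absurd hpB hc
          · simp only [Finset.mem_singleton]
            rw [h']; rfl
        rcases hx with rfl | rfl
        · calc (P.filter (fun p => Sym2.mk p.1 p.2 = s(x, b))).card
              ≤ ({(b, x)} : Finset (V × V)).card := Finset.card_le_card (hsub x b hxB)
            _ ≤ 1 := by simp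
        · have : s(a, x) = s(x, a) := Sym2.eq_swap
          rw [this]
          calc (P.filter (fun p => Sym2.mk p.1 p.2 = s(x, a))).card
              ≤ ({(a, x)} : Finset (V × V)).card := Finset.card_le_card (hsub x a hxB)
            _ ≤ 1 := by simp
    calc ∑ e ∈ EB1, (P.filter (fun p => Sym2.mk p.1 p.2 = e)).card
        ≤ ∑ e ∈ EB1, (1 + if (∀ x ∈ e, B x) then 1 else 0) := Finset.sum_le_sum hbound
      _ = EB1.card + ∑ e ∈ EB1, (if (∀ x ∈ e, B x) then 1 else 0) := by
          rw [Finset.sum_add_distrib, Finset.sum_const, smul_eq_mul, mul_one]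
      _ = EB1.card + (EB1.filter (fun e => ∀ x ∈ e, B x)).card := by
          rw [← Finset.card_filter]
      _ = EB1.card + E2.card := by
          congr 1
          congr 1
          rw [hEB1, Finset.filter_filter, hE2]
          apply Finset.filter_congr
          intro e he
          obtain ⟨a, b, rfl⟩ := sym2_ex e
          constructor
          · rintro ⟨-, h2⟩; exact h2
          · intro h2
            exact ⟨⟨a, Sym2.mem_mk_left _ _, h2 a (Sym2.mem_mk_left _ _)⟩, h2⟩
  -- bound on edges inside B : E2.card + 1 ≤ Bs.card
  set H2 : SimpleGraph V := SimpleGraph.fromRel (fun a b => T.Adj a b ∧ B a ∧ B b) with hH2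
  have hH2adj : ∀ {a b : V}, H2.Adj a b ↔ T.Adj a b ∧ B a ∧ B b := by
    intro a b
    rw [hH2, fromRel_adj]
    constructor
    · rintro ⟨hne, ⟨h1, h2, h3⟩ | ⟨h1, h2, h3⟩⟩
      exacts [⟨h1, h2, h3⟩, ⟨h1.symm, h3, h2⟩]
    · rintro ⟨h1, h2, h3⟩
      exact ⟨h1.ne, Or.inl ⟨h1, h2, h3⟩⟩
  have hH2le : H2 ≤ T := by intro a b hab; exact (hH2adj.1 hab).1
  have hH2acyc : H2.IsAcyclic := isAcyclic_mono hH2le hTtree.IsAcyclic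
  have hH2edges : H2.edgeSet = ↑E2 := by
    ext e
    induction e using Sym2.ind with
    | _ a b =>
      simp only [mem_edgeSet, hE2, Finset.coe_filter, Set.mem_setOf_eq, hET,
        mem_edgeFinset, mem_edgeSet, Sym2.mem_iff, hH2adj]
      constructor
      · rintro ⟨h1, h2, h3⟩
        exact ⟨h1, by rintro x (rfl | rfl) <;> assumption⟩
      · rintro ⟨h1, h2⟩
        exact ⟨h1, h2 a (Or.inl rfl), h2 b (Or.inr rfl)⟩
  have hBcc := acyclic_edges_add_cc_le H2 hH2acyc
  rw [hH2edges, Set.ncard_coe_finset] at hBcc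
  -- lower bound on components of H2
  have hH2reach : ∀ {x y : V}, H2.Reachable x y → x = y ∨ (B x ∧ B y) := by
    intro x y hr
    obtain ⟨w⟩ := hr
    have hx : x = y ∨ B x := by
      cases w with
      | nil => exact Or.inl rfl
      | cons ha p => exact Or.inr (hH2adj.1 ha).2.1
    have hy : x = y ∨ B y := by
      cases hw : w.reverse with
      | nil => exact Or.inl rfl
      | cons ha p => exact Or.inr (hH2adj.1 ha).2.1
    rcases hx with rfl | hx
    · exact Or.inl rfl
    rcases hy with rfl | hy
    · exact Or.inl rfl
    exact Or.inr ⟨hx, hy⟩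
  haveI : Fintype H2.ConnectedComponent := Fintype.ofFinite _
  have hH2cclb : n - Bs.card + 1 ≤ Nat.card H2.ConnectedComponent := by
    set S : Finset V := insert b0 (univ \ Bs) with hS
    have hScard : S.card = n - Bs.card + 1 := by
      rw [hS, Finset.card_insert_of_notMem (by simp [hb0Bs]),
        Finset.card_sdiff_of_subset (Finset.subset_univ _), Finset.card_univ]
    have hinj : Set.InjOn H2.connectedComponentMk ↑S := by
      intro x hx y hy heq
      rcases hH2reach (ConnectedComponent.exact heq) with rfl | ⟨hBx, hBy⟩
      · rfl
      · simp only [hS, Finset.coe_insert, Set.mem_insert_iff, Finset.coe_sdiff,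
          Set.mem_diff, Finset.coe_univ, Finset.mem_coe, hBs] at hx hy
        rcases hx with rfl | ⟨-, hx⟩
        · rcases hy with rfl | ⟨-, hy⟩
          · rfl
          · exact absurd (by simp [hBy] : y ∈ filter (fun v => B v) univ) hy
        · exact absurd (by simp [hBx] : x ∈ filter (fun v => B v) univ) hx
    have := Finset.card_le_card_of_injOn H2.connectedComponentMk
      (fun a _ => Finset.mem_univ _) hinj
    rw [Finset.card_univ] at this
    rw [Nat.card_eq_fintype_card]
    omega
  have hBsn : Bs.card ≤ n := by rw [hn, ← Finset.card_univ]; exact Finset.card_le_card (Finset.subset_univ _)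
  -- quotient graph on components of F
  haveI : Fintype F.ConnectedComponent := Fintype.ofFinite _
  set Q : SimpleGraph F.ConnectedComponent := SimpleGraph.fromRel
    (fun c d => ∃ x y : V, T'.Adj x y ∧ mkC x = c ∧ mkC y = d) with hQ
  have hQwalk : ∀ {x y : V}, T'.Walk x y → Q.Reachable (mkC x) (mkC y) := by
    intro x y w
    induction w with
    | nil => exact Reachable.refl _
    | @cons a b c ha p ih =>
      refine Reachable.trans ?_ ih
      by_cases hab : mkC a = mkC b
      · rw [hab]
      · exact (Adj.reachable (by
          rw [hQ, fromRel_adj]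
          exact ⟨hab, Or.inl ⟨a, b, ha, rfl, rfl⟩⟩))
  have hQconn : Q.Connected := by
    haveI : Nonempty F.ConnectedComponent := ⟨mkC b0⟩
    constructor
    intro c d
    obtain ⟨x, rfl⟩ := c.exists_rep
    obtain ⟨y, rfl⟩ := d.exists_rep
    obtain ⟨w⟩ := hT'tree.isConnected.preconnected x y
    exact hQwalk w
  have hQcc : Nat.card Q.ConnectedComponent ≤ 1 := by
    haveI : Fintype Q.ConnectedComponent := Fintype.ofFinite _
    rw [Nat.card_eq_fintype_card]
    rw [Fintype.card_le_one_iff]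
    intro c d
    obtain ⟨x, rfl⟩ := c.exists_rep
    obtain ⟨y, rfl⟩ := d.exists_rep
    exact ConnectedComponent.sound (hQconn.preconnected x y)
  have hAQ := card_le_cc_add_edges Q
  rw [Nat.card_eq_fintype_card (α := F.ConnectedComponent)] at hm
  -- the set of inter-component edges of T'
  set Inter : Finset (Sym2 V) := T'.edgeFinset.filter
    (fun e => ¬ (Sym2.map mkC e).IsDiag) with hInter
  have hQle : Q.edgeSet.ncard ≤ Inter.card := by
    have hPQ : ∀ ε ∈ Q.edgeSet, ∃ x y : V, T'.Adj x y ∧ s(mkC x, mkC y) = ε := by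
      intro ε hε
      obtain ⟨c, d, rfl⟩ := sym2_ex ε
      have hQadj : Q.Adj c d := hε
      rw [hQ, fromRel_adj] at hQadj
      obtain ⟨hne, ⟨x, y, h1, h2, h3⟩ | ⟨x, y, h1, h2, h3⟩⟩ := hQadj
      · exact ⟨x, y, h1, by rw [h2, h3]⟩
      · exact ⟨y, x, h1.symm, by rw [h2, h3]⟩
    choose! f1 f2 hfadj hfmap using hPQ
    have h1 : Q.edgeSet.ncard ≤ (↑Inter : Set (Sym2 V)).ncard := by
      apply Set.ncard_le_ncard_of_injOn (fun ε => s(f1 ε, f2 ε))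
      · intro ε hε
        simp only [Finset.coe_filter, Set.mem_setOf_eq, hInter, mem_edgeFinset, mem_edgeSet]
        refine ⟨(hfadj ε hε), ?_⟩
        rw [Sym2.map_pair_eq, hfmap ε hε]
        exact not_isDiag_of_mem_edgeSet Q hε
      · intro ε1 h1 ε2 h2 heq
        have := congrArg (Sym2.map mkC) heq
        rw [Sym2.map_pair_eq, Sym2.map_pair_eq, hfmap ε1 h1, hfmap ε2 h2] at this
        exact this
    rwa [Set.ncard_coe_finset] at h1
  -- every inter-component edge has an endpoint in B
  have hInterB : ∀ e ∈ Inter, ∃ x y : V, s(x, y) = e ∧ B x ∧ T'.Adj x y := by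
    intro e he
    obtain ⟨a, b, rfl⟩ := sym2_ex e
    simp only [hInter, Finset.mem_filter, mem_edgeFinset, mem_edgeSet] at he
    obtain ⟨hadj, hdiag⟩ := he
    rw [Sym2.map_pair_eq] at hdiag
    have hne : mkC a ≠ mkC b := by
      intro hcc
      exact hdiag (by rw [hcc]; exact Sym2.isDiag_iff_proj_eq.2 rfl)
    have hBab : B a ∨ B b := by
      by_cases hTadj : T.Adj a b
      · by_contra hno
        push_neg at hno
        exact hne (ConnectedComponent.connectedComponentMk_eq_of_adj
          (hFadj.2 ⟨hTadj, hno.1, hno.2⟩))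
      · rcases h a b (hT'G hadj) hTadj with hBa | hBb | hreach
        · exact Or.inl hBa
        · exact Or.inr hBb
        · exact absurd (ConnectedComponent.sound hreach) hne
    rcases hBab with hBa | hBb
    · exact ⟨a, b, rfl, hBa, hadj⟩
    · exact ⟨b, a, Sym2.eq_swap, hBb, hadj.symm⟩
  choose! g1 g2 hg hgB hgadj using hInterB
  set P' : Finset (V × V) := univ.filter (fun p => T'.Adj p.1 p.2 ∧ B p.1) with hP'
  have hInterle : Inter.card ≤ ∑ b ∈ Bs, (T'.neighborSet b).ncard := by
    have h1 : Inter.card ≤ P'.card := by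
      apply Finset.card_le_card_of_injOn (fun e => (g1 e, g2 e))
      · intro e he
        simp only [Finset.mem_coe, hP', Finset.mem_filter, Finset.mem_univ, true_and]
        exact ⟨hgadj e he, hgB e he⟩
      · intro e1 h1 e2 h2 heq
        have := congrArg Sym2.mk.uncurry heq
        rw [show Sym2.mk.uncurry (g1 e1, g2 e1) = s(g1 e1, g2 e1) from rfl] at this
        rw [show Sym2.mk.uncurry (g1 e2, g2 e2) = s(g1 e2, g2 e2) from rfl] at this
        rw [hg e1 h1, hg e2 h2] at this
        exact this
    have h2 : P' ⊆ Bs.biUnion (fun b => (T'.neighborSet b).toFinset.image (fun w => (b, w))) := by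
      intro p hp
      simp only [hP', Finset.mem_filter, Finset.mem_univ, true_and] at hp
      apply Finset.mem_biUnion.2
      refine ⟨p.1, by simp [hBs, hp.2], ?_⟩
      apply Finset.mem_image.2
      exact ⟨p.2, Set.mem_toFinset.2 hp.1, rfl⟩
    have h3 : P'.card ≤ ∑ b ∈ Bs, ((T'.neighborSet b).toFinset.image (fun w => (b, w))).card :=
      le_trans (Finset.card_le_card h2) (Finset.card_biUnion_le)
    refine le_trans h1 (le_trans h3 (Finset.sum_le_sum ?_))
    intro b _
    rw [Set.ncard_eq_toFinset_card']
    exact Finset.card_image_le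
  have hsumT' : ∑ b ∈ Bs, (T'.neighborSet b).ncard ≤ Bs.card * (k - 2) := by
    rw [← smul_eq_mul]
    exact Finset.sum_le_card_nsmul _ _ _ (fun b _ => hmax' b)
  -- final arithmetic
  obtain ⟨a, rfl⟩ : ∃ a, k = a + 2 := ⟨k - 2, by omega⟩
  have hk1 : a + 2 - 1 = a + 1 := by omega
  have hk2' : a + 2 - 2 = a := by omega
  rw [hk1] at hsumT
  rw [hk2'] at hsumT'
  have hmul : Bs.card * (a + 1) = Bs.card * a + Bs.card := by ring
  rw [hmul] at hsumT
  have hb1 : 1 ≤ Bs.card := Finset.card_pos.2 ⟨b0, hb0Bs⟩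
  obtain ⟨x, hx⟩ : ∃ x, Bs.card * a = x := ⟨_, rfl⟩
  rw [hx] at hsumT hsumT'
  -- collect the chain
  have c1 : x + Bs.card ≤ EB1.card + E2.card := by
    calc x + Bs.card ≤ ∑ b ∈ Bs, (T.neighborSet b).ncard := hsumT
      _ = P.card := hPcard.symm
      _ ≤ EB1.card + E2.card := hPle
  rw [← hm] at hAQ
  omega
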